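/- Let θ : ℂ[w₀,…,w₁₃] → ℂ[x₀,x₁,y₀,y₁,z₀,z₁] be the ℂ-algebra homomorphism with w₀ ↦ x₀²y₀²z₀², w₁ ↦ x₀²y₀²z₁², w₂ ↦ x₀²y₀y₁z₀z₁, w₃ ↦ x₀²y₁²z₀², w₄ ↦ x₀²y₁²z₁², w₅ ↦ x₀x₁y₀²z₀z₁, w₆ ↦ x₀x₁y₀y₁z₀², w₇ ↦ x₀x₁y₀y₁z₁², w₈ ↦ x₀x₁y₁²z₀z₁, w₉ ↦ x₁²y₀²z₀², w₁₀ ↦ x₁²y₀²z₁², w₁₁ ↦ x₁²y₀y₁z₀z₁, w₁₂ ↦ x₁²y₁²z₀², w₁₃ ↦ x₁²y₁²z₁². Let e₀,…,e₁₃ be the standard basis of ℂ¹⁴, and set P₁=e₄, P₂=e₀, P₃=e₁₀, P₄=e₁₂, P₁′=e₉, P₂′=e₁₃, P₃′=e₃, P₄′=e₁. Then: (a) for each of the 12 pairs (P₁,P₂′), (P₁,P₃′), (P₁,P₄′), (P₂,P₁′), (P₂,P₃′), (P₂,P₄′), (P₃,P₁′), (P₃,P₂′), (P₃,P₄′), (P₄,P₁′),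 (P₄,P₂′), (P₄,P₃′), every f ∈ ker θ and all s,t ∈ ℂ satisfy f(s·P + t·Q) = 0; (b) for every other pair of distinct points among {P₁,P₂,P₃,P₄,P₁′,P₂′,P₃′,P₄′} there exist f ∈ ker θ and s,t ∈ ℂ with f(s·P + t·Q) ≠ 0. -/
import Mathlib


set_option maxHeartbeats 1000000

open MvPolynomial

/-- The ℂ-algebra homomorphism θ : ℂ[w₀,…,w₁₃] → ℂ[x₀,x₁,y₀,y₁,z₀,z₁]
(variables `X 0,X 1` = x₀,x₁; `X 2,X 3` = y₀,y₁; `X 4,X 5` = z₀,z₁) determined by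
w₀ ↦ x₀²y₀²z₀², w₁ ↦ x₀²y₀²z₁², w₂ ↦ x₀²y₀y₁z₀z₁, w₃ ↦ x₀²y₁²z₀², w₄ ↦ x₀²y₁²z₁²,
w₅ ↦ x₀x₁y₀²z₀z₁, w₆ ↦ x₀x₁y₀y₁z₀², w₇ ↦ x₀x₁y₀y₁z₁², w₈ ↦ x₀x₁y₁²z₀z₁,
w₉ ↦ x₁²y₀²z₀², w₁₀ ↦ x₁²y₀²z₁², w₁₁ ↦ x₁²y₀y₁z₀z₁, w₁₂ ↦ x₁²y₁²z₀², w₁₃ ↦ x₁²y₁²z₁². -/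
noncomputable def theta : MvPolynomial (Fin 14) ℂ →ₐ[ℂ] MvPolynomial (Fin 6) ℂ :=
  aeval ![X 0 ^ 2 * X 2 ^ 2 * X 4 ^ 2, X 0 ^ 2 * X 2 ^ 2 * X 5 ^ 2,
    X 0 ^ 2 * X 2 * X 3 * X 4 * X 5, X 0 ^ 2 * X 3 ^ 2 * X 4 ^ 2,
    X 0 ^ 2 * X 3 ^ 2 * X 5 ^ 2, X 0 * X 1 * X 2 ^ 2 * X 4 * X 5,
    X 0 * X 1 * X 2 * X 3 * X 4 ^ 2, X 0 * X 1 * X 2 * X 3 * X 5 ^ 2,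
    X 0 * X 1 * X 3 ^ 2 * X 4 * X 5, X 1 ^ 2 * X 2 ^ 2 * X 4 ^ 2,
    X 1 ^ 2 * X 2 ^ 2 * X 5 ^ 2, X 1 ^ 2 * X 2 * X 3 * X 4 * X 5,
    X 1 ^ 2 * X 3 ^ 2 * X 4 ^ 2, X 1 ^ 2 * X 3 ^ 2 * X 5 ^ 2]

/-- The standard basis vectors of ℂ¹⁴. The eight singular points of W_{BS}¹³ are
P₁ = e₄, P₂ = e₀, P₃ = e₁₀, P₄ = e₁₂, P₁′ = e₉, P₂′ = e₁₃, P₃′ = e₃, P₄′ = e₁. -/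
noncomputable def e : Fin 14 → Fin 14 → ℂ := fun i => Pi.single i 1

/-- The indices of the eight singular points of W_{BS}¹³ among the coordinate
points of ℂ¹⁴. -/
def singIdx : Set (Fin 14) := {4, 0, 10, 12, 9, 13, 3, 1}

/-- The (symmetrized) set of index pairs corresponding to the 12 pairs
(P₁,P₂′), (P₁,P₃′), (P₁,P₄′), (P₂,P₁′), (P₂,P₃′), (P₂,P₄′), (P₃,P₁′), (P₃,P₂′),
(P₃,P₄′), (P₄,P₁′), (P₄,P₂′), (P₄,P₃′). -/
def assocPairs : Set (Fin 14 × Fin 14) :=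
  {(4, 13), (4, 3), (4, 1), (0, 9), (0, 3), (0, 1),
   (10, 9), (10, 13), (10, 1), (12, 9), (12, 13), (12, 3),
   (13, 4), (3, 4), (1, 4), (9, 0), (3, 0), (1, 0),
   (9, 10), (13, 10), (1, 10), (9, 12), (13, 12), (3, 12)}

noncomputable def Mon : Fin 14 → MvPolynomial (Fin 6) ℂ :=
  ![X 0 ^ 2 * X 2 ^ 2 * X 4 ^ 2, X 0 ^ 2 * X 2 ^ 2 * X 5 ^ 2,
    X 0 ^ 2 * X 2 * X 3 * X 4 * X 5, X 0 ^ 2 * X 3 ^ 2 * X 4 ^ 2,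
    X 0 ^ 2 * X 3 ^ 2 * X 5 ^ 2, X 0 * X 1 * X 2 ^ 2 * X 4 * X 5,
    X 0 * X 1 * X 2 * X 3 * X 4 ^ 2, X 0 * X 1 * X 2 * X 3 * X 5 ^ 2,
    X 0 * X 1 * X 3 ^ 2 * X 4 * X 5, X 1 ^ 2 * X 2 ^ 2 * X 4 ^ 2,
    X 1 ^ 2 * X 2 ^ 2 * X 5 ^ 2, X 1 ^ 2 * X 2 * X 3 * X 4 * X 5,
    X 1 ^ 2 * X 3 ^ 2 * X 4 ^ 2, X 1 ^ 2 * X 3 ^ 2 * X 5 ^ 2]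

lemma theta_eq : theta = aeval Mon := rfl

@[simp] lemma Mon_0 : Mon 0 = X 0 ^ 2 * X 2 ^ 2 * X 4 ^ 2 := rfl
@[simp] lemma Mon_1 : Mon 1 = X 0 ^ 2 * X 2 ^ 2 * X 5 ^ 2 := rfl
@[simp] lemma Mon_2 : Mon 2 = X 0 ^ 2 * X 2 * X 3 * X 4 * X 5 := rfl
@[simp] lemma Mon_3 : Mon 3 = X 0 ^ 2 * X 3 ^ 2 * X 4 ^ 2 := rfl
@[simp] lemma Mon_4 : Mon 4 = X 0 ^ 2 * X 3 ^ 2 * X 5 ^ 2 := rfl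
@[simp] lemma Mon_5 : Mon 5 = X 0 * X 1 * X 2 ^ 2 * X 4 * X 5 := rfl
@[simp] lemma Mon_6 : Mon 6 = X 0 * X 1 * X 2 * X 3 * X 4 ^ 2 := rfl
@[simp] lemma Mon_7 : Mon 7 = X 0 * X 1 * X 2 * X 3 * X 5 ^ 2 := rfl
@[simp] lemma Mon_8 : Mon 8 = X 0 * X 1 * X 3 ^ 2 * X 4 * X 5 := rfl
@[simp] lemma Mon_9 : Mon 9 = X 1 ^ 2 * X 2 ^ 2 * X 4 ^ 2 := rfl
@[simp] lemma Mon_10 : Mon 10 = X 1 ^ 2 * X 2 ^ 2 * X 5 ^ 2 := rfl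
@[simp] lemma Mon_11 : Mon 11 = X 1 ^ 2 * X 2 * X 3 * X 4 * X 5 := rfl
@[simp] lemma Mon_12 : Mon 12 = X 1 ^ 2 * X 3 ^ 2 * X 4 ^ 2 := rfl
@[simp] lemma Mon_13 : Mon 13 = X 1 ^ 2 * X 3 ^ 2 * X 5 ^ 2 := rfl

@[simp] lemma vec6_0 (g0 g1 g2 g3 g4 g5 : ℂ) : ![g0,g1,g2,g3,g4,g5] 0 = g0 := rfl
@[simp] lemma vec6_1 (g0 g1 g2 g3 g4 g5 : ℂ) : ![g0,g1,g2,g3,g4,g5] 1 = g1 := rfl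
@[simp] lemma vec6_2 (g0 g1 g2 g3 g4 g5 : ℂ) : ![g0,g1,g2,g3,g4,g5] 2 = g2 := rfl
@[simp] lemma vec6_3 (g0 g1 g2 g3 g4 g5 : ℂ) : ![g0,g1,g2,g3,g4,g5] 3 = g3 := rfl
@[simp] lemma vec6_4 (g0 g1 g2 g3 g4 g5 : ℂ) : ![g0,g1,g2,g3,g4,g5] 4 = g4 := rfl
@[simp] lemma vec6_5 (g0 g1 g2 g3 g4 g5 : ℂ) : ![g0,g1,g2,g3,g4,g5] 5 = g5 := rfl

lemma key_vanish (v : Fin 14 → ℂ) (g : Fin 6 → ℂ)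
    (hv : ∀ k, eval g (Mon k) = v k)
    {f : MvPolynomial (Fin 14) ℂ} (hf : f ∈ RingHom.ker theta) : eval v f = 0 := by
  have h1 : eval v f = aeval g (theta f) := by
    rw [theta_eq, comp_aeval_apply]
    have h2 : (fun i => (aeval g : MvPolynomial (Fin 6) ℂ →ₐ[ℂ] ℂ) (Mon i)) = v := by
      funext k; rw [← hv k]; rfl
    rw [h2]; rfl
  rw [h1, show theta f = 0 from hf, map_zero]

lemma key_line (i j : Fin 14) (g : Fin 6 → ℂ) (s t : ℂ)
    (hv : ∀ k, eval g (Mon k) = s * (Pi.single i 1 : Fin 14 → ℂ) k + t * (Pi.single j 1 : Fin 14 → ℂ) k)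
    {f : MvPolynomial (Fin 14) ℂ} (hf : f ∈ RingHom.ker theta) :
    eval (s • e i + t • e j) f = 0 := by
  apply key_vanish _ g _ hf
  intro k
  simpa [e] using hv k

lemma key2 (i j a b : Fin 14) (hij : i ≠ j) (hai : a ≠ i) (haj : a ≠ j)
    (hbi : b ≠ i) (hbj : b ≠ j) (hM : Mon i * Mon j = Mon a * Mon b) :
    ∃ f ∈ RingHom.ker theta, ∃ s t : ℂ, eval (s • e i + t • e j) f ≠ 0 := by
  refine ⟨X i * X j - X a * X b, ?_, 1, 1, ?_⟩
  · show theta (X i * X j - X a * X b) = 0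
    rw [theta_eq]
    simp only [map_sub, map_mul, aeval_X]
    rw [hM, sub_self]
  · simp [e, Pi.single_apply, hij, hij.symm, hai, haj, hbi, hbj,
      hai.symm, haj.symm, hbi.symm, hbj.symm]


/-- Configuration of the eight singular points of W_{BS}¹³:
(a) for each of the 12 listed pairs, the line joining the two coordinate points lies
on W_{BS}¹³ (every f ∈ ker θ vanishes on it);
(b) for every other pair of distinct singular points the joining line does not lie
on W_{BS}¹³. -/
theorem configuration_of_singular_points_of_WBS13 :
    (∀ p ∈ assocPairs, ∀ f ∈ RingHom.ker theta, ∀ s t : ℂ,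
      eval (s • e p.1 + t • e p.2) f = 0) ∧
    (∀ i ∈ singIdx, ∀ j ∈ singIdx, i ≠ j → (i, j) ∉ assocPairs →
      ∃ f ∈ RingHom.ker theta, ∃ s t : ℂ, eval (s • e i + t • e j) f ≠ 0) := by
  constructor
  · intro p hp f hf s t
    simp only [assocPairs, Set.mem_insert_iff, Set.mem_singleton_iff] at hp
    obtain rfl|rfl|rfl|rfl|rfl|rfl|rfl|rfl|rfl|rfl|rfl|rfl|rfl|rfl|rfl|rfl|rfl|rfl|rfl|rfl|rfl|rfl|rfl|rfl := hp
    · obtain ⟨a, ha⟩ := IsAlgClosed.exists_pow_nat_eq (k := ℂ) s two_pos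
      obtain ⟨b, hb⟩ := IsAlgClosed.exists_pow_nat_eq (k := ℂ) t two_pos
      apply key_line 4 13 ![a,b,0,1,0,1] s t _ hf
      intro k
      fin_cases k <;> simp [Pi.single_apply] <;>
        first | linear_combination ha | linear_combination hb
    · obtain ⟨a, ha⟩ := IsAlgClosed.exists_pow_nat_eq (k := ℂ) s two_pos
      obtain ⟨b, hb⟩ := IsAlgClosed.exists_pow_nat_eq (k := ℂ) t two_pos
      apply key_line 4 3 ![1,0,0,1,b,a] s t _ hf
      intro k
      fin_cases k <;> simp [Pi.single_apply] <;>
        first | linear_combination ha | linear_combination hb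
    · obtain ⟨a, ha⟩ := IsAlgClosed.exists_pow_nat_eq (k := ℂ) s two_pos
      obtain ⟨b, hb⟩ := IsAlgClosed.exists_pow_nat_eq (k := ℂ) t two_pos
      apply key_line 4 1 ![1,0,b,a,0,1] s t _ hf
      intro k
      fin_cases k <;> simp [Pi.single_apply] <;>
        first | linear_combination ha | linear_combination hb
    · obtain ⟨a, ha⟩ := IsAlgClosed.exists_pow_nat_eq (k := ℂ) s two_pos
      obtain ⟨b, hb⟩ := IsAlgClosed.exists_pow_nat_eq (k := ℂ) t two_pos
      apply key_line 0 9 ![a,b,1,0,1,0] s t _ hf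
      intro k
      fin_cases k <;> simp [Pi.single_apply] <;>
        first | linear_combination ha | linear_combination hb
    · obtain ⟨a, ha⟩ := IsAlgClosed.exists_pow_nat_eq (k := ℂ) s two_pos
      obtain ⟨b, hb⟩ := IsAlgClosed.exists_pow_nat_eq (k := ℂ) t two_pos
      apply key_line 0 3 ![1,0,a,b,1,0] s t _ hf
      intro k
      fin_cases k <;> simp [Pi.single_apply] <;>
        first | linear_combination ha | linear_combination hb
    · obtain ⟨a, ha⟩ := IsAlgClosed.exists_pow_nat_eq (k := ℂ) s two_pos
      obtain ⟨b, hb⟩ := IsAlgClosed.exists_pow_nat_eq (k := ℂ) t two_pos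
      apply key_line 0 1 ![1,0,1,0,a,b] s t _ hf
      intro k
      fin_cases k <;> simp [Pi.single_apply] <;>
        first | linear_combination ha | linear_combination hb
    · obtain ⟨a, ha⟩ := IsAlgClosed.exists_pow_nat_eq (k := ℂ) s two_pos
      obtain ⟨b, hb⟩ := IsAlgClosed.exists_pow_nat_eq (k := ℂ) t two_pos
      apply key_line 10 9 ![0,1,1,0,b,a] s t _ hf
      intro k
      fin_cases k <;> simp [Pi.single_apply] <;>
        first | linear_combination ha | linear_combination hb
    · obtain ⟨a, ha⟩ := IsAlgClosed.exists_pow_nat_eq (k := ℂ) s two_pos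
      obtain ⟨b, hb⟩ := IsAlgClosed.exists_pow_nat_eq (k := ℂ) t two_pos
      apply key_line 10 13 ![0,1,a,b,0,1] s t _ hf
      intro k
      fin_cases k <;> simp [Pi.single_apply] <;>
        first | linear_combination ha | linear_combination hb
    · obtain ⟨a, ha⟩ := IsAlgClosed.exists_pow_nat_eq (k := ℂ) s two_pos
      obtain ⟨b, hb⟩ := IsAlgClosed.exists_pow_nat_eq (k := ℂ) t two_pos
      apply key_line 10 1 ![b,a,1,0,0,1] s t _ hf
      intro k
      fin_cases k <;> simp [Pi.single_apply] <;>
        first | linear_combination ha | linear_combination hb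
    · obtain ⟨a, ha⟩ := IsAlgClosed.exists_pow_nat_eq (k := ℂ) s two_pos
      obtain ⟨b, hb⟩ := IsAlgClosed.exists_pow_nat_eq (k := ℂ) t two_pos
      apply key_line 12 9 ![0,1,b,a,1,0] s t _ hf
      intro k
      fin_cases k <;> simp [Pi.single_apply] <;>
        first | linear_combination ha | linear_combination hb
    · obtain ⟨a, ha⟩ := IsAlgClosed.exists_pow_nat_eq (k := ℂ) s two_pos
      obtain ⟨b, hb⟩ := IsAlgClosed.exists_pow_nat_eq (k := ℂ) t two_pos
      apply key_line 12 13 ![0,1,0,1,a,b] s t _ hf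
      intro k
      fin_cases k <;> simp [Pi.single_apply] <;>
        first | linear_combination ha | linear_combination hb
    · obtain ⟨a, ha⟩ := IsAlgClosed.exists_pow_nat_eq (k := ℂ) s two_pos
      obtain ⟨b, hb⟩ := IsAlgClosed.exists_pow_nat_eq (k := ℂ) t two_pos
      apply key_line 12 3 ![b,a,0,1,1,0] s t _ hf
      intro k
      fin_cases k <;> simp [Pi.single_apply] <;>
        first | linear_combination ha | linear_combination hb
    · obtain ⟨a, ha⟩ := IsAlgClosed.exists_pow_nat_eq (k := ℂ) s two_pos
      obtain ⟨b, hb⟩ := IsAlgClosed.exists_pow_nat_eq (k := ℂ) t two_pos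
      apply key_line 13 4 ![b,a,0,1,0,1] s t _ hf
      intro k
      fin_cases k <;> simp [Pi.single_apply] <;>
        first | linear_combination ha | linear_combination hb
    · obtain ⟨a, ha⟩ := IsAlgClosed.exists_pow_nat_eq (k := ℂ) s two_pos
      obtain ⟨b, hb⟩ := IsAlgClosed.exists_pow_nat_eq (k := ℂ) t two_pos
      apply key_line 3 4 ![1,0,0,1,a,b] s t _ hf
      intro k
      fin_cases k <;> simp [Pi.single_apply] <;>
        first | linear_combination ha | linear_combination hb
    · obtain ⟨a, ha⟩ := IsAlgClosed.exists_pow_nat_eq (k := ℂ) s two_pos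
      obtain ⟨b, hb⟩ := IsAlgClosed.exists_pow_nat_eq (k := ℂ) t two_pos
      apply key_line 1 4 ![1,0,a,b,0,1] s t _ hf
      intro k
      fin_cases k <;> simp [Pi.single_apply] <;>
        first | linear_combination ha | linear_combination hb
    · obtain ⟨a, ha⟩ := IsAlgClosed.exists_pow_nat_eq (k := ℂ) s two_pos
      obtain ⟨b, hb⟩ := IsAlgClosed.exists_pow_nat_eq (k := ℂ) t two_pos
      apply key_line 9 0 ![b,a,1,0,1,0] s t _ hf
      intro k
      fin_cases k <;> simp [Pi.single_apply] <;>
        first | linear_combination ha | linear_combination hb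
    · obtain ⟨a, ha⟩ := IsAlgClosed.exists_pow_nat_eq (k := ℂ) s two_pos
      obtain ⟨b, hb⟩ := IsAlgClosed.exists_pow_nat_eq (k := ℂ) t two_pos
      apply key_line 3 0 ![1,0,b,a,1,0] s t _ hf
      intro k
      fin_cases k <;> simp [Pi.single_apply] <;>
        first | linear_combination ha | linear_combination hb
    · obtain ⟨a, ha⟩ := IsAlgClosed.exists_pow_nat_eq (k := ℂ) s two_pos
      obtain ⟨b, hb⟩ := IsAlgClosed.exists_pow_nat_eq (k := ℂ) t two_pos
      apply key_line 1 0 ![1,0,1,0,b,a] s t _ hf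
      intro k
      fin_cases k <;> simp [Pi.single_apply] <;>
        first | linear_combination ha | linear_combination hb
    · obtain ⟨a, ha⟩ := IsAlgClosed.exists_pow_nat_eq (k := ℂ) s two_pos
      obtain ⟨b, hb⟩ := IsAlgClosed.exists_pow_nat_eq (k := ℂ) t two_pos
      apply key_line 9 10 ![0,1,1,0,a,b] s t _ hf
      intro k
      fin_cases k <;> simp [Pi.single_apply] <;>
        first | linear_combination ha | linear_combination hb
    · obtain ⟨a, ha⟩ := IsAlgClosed.exists_pow_nat_eq (k := ℂ) s two_pos
      obtain ⟨b, hb⟩ := IsAlgClosed.exists_pow_nat_eq (k := ℂ) t two_pos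
      apply key_line 13 10 ![0,1,b,a,0,1] s t _ hf
      intro k
      fin_cases k <;> simp [Pi.single_apply] <;>
        first | linear_combination ha | linear_combination hb
    · obtain ⟨a, ha⟩ := IsAlgClosed.exists_pow_nat_eq (k := ℂ) s two_pos
      obtain ⟨b, hb⟩ := IsAlgClosed.exists_pow_nat_eq (k := ℂ) t two_pos
      apply key_line 1 10 ![a,b,1,0,0,1] s t _ hf
      intro k
      fin_cases k <;> simp [Pi.single_apply] <;>
        first | linear_combination ha | linear_combination hb
    · obtain ⟨a, ha⟩ := IsAlgClosed.exists_pow_nat_eq (k := ℂ) s two_pos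
      obtain ⟨b, hb⟩ := IsAlgClosed.exists_pow_nat_eq (k := ℂ) t two_pos
      apply key_line 9 12 ![0,1,a,b,1,0] s t _ hf
      intro k
      fin_cases k <;> simp [Pi.single_apply] <;>
        first | linear_combination ha | linear_combination hb
    · obtain ⟨a, ha⟩ := IsAlgClosed.exists_pow_nat_eq (k := ℂ) s two_pos
      obtain ⟨b, hb⟩ := IsAlgClosed.exists_pow_nat_eq (k := ℂ) t two_pos
      apply key_line 13 12 ![0,1,0,1,b,a] s t _ hf
      intro k
      fin_cases k <;> simp [Pi.single_apply] <;>
        first | linear_combination ha | linear_combination hb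
    · obtain ⟨a, ha⟩ := IsAlgClosed.exists_pow_nat_eq (k := ℂ) s two_pos
      obtain ⟨b, hb⟩ := IsAlgClosed.exists_pow_nat_eq (k := ℂ) t two_pos
      apply key_line 3 12 ![a,b,0,1,1,0] s t _ hf
      intro k
      fin_cases k <;> simp [Pi.single_apply] <;>
        first | linear_combination ha | linear_combination hb
  · intro i hi j hj hne hna
    simp only [singIdx, Set.mem_insert_iff, Set.mem_singleton_iff] at hi hj
    obtain rfl|rfl|rfl|rfl|rfl|rfl|rfl|rfl := hi <;> obtain rfl|rfl|rfl|rfl|rfl|rfl|rfl|rfl := hj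
    · exact absurd rfl hne
    · exact key2 4 0 2 2 (by decide) (by decide) (by decide) (by decide) (by decide) (by rw [Mon_0, Mon_2, Mon_4]; ring)
    · exact key2 4 10 7 7 (by decide) (by decide) (by decide) (by decide) (by decide) (by rw [Mon_4, Mon_7, Mon_10]; ring)
    · exact key2 4 12 8 8 (by decide) (by decide) (by decide) (by decide) (by decide) (by rw [Mon_4, Mon_8, Mon_12]; ring)
    · exact key2 4 9 2 11 (by decide) (by decide) (by decide) (by decide) (by decide) (by rw [Mon_2, Mon_4, Mon_9, Mon_11]; ring)
    · exact absurd (by simp [assocPairs]) hna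
    · exact absurd (by simp [assocPairs]) hna
    · exact absurd (by simp [assocPairs]) hna
    · exact key2 0 4 2 2 (by decide) (by decide) (by decide) (by decide) (by decide) (by rw [Mon_0, Mon_2, Mon_4]; ring)
    · exact absurd rfl hne
    · exact key2 0 10 5 5 (by decide) (by decide) (by decide) (by decide) (by decide) (by rw [Mon_0, Mon_5, Mon_10]; ring)
    · exact key2 0 12 6 6 (by decide) (by decide) (by decide) (by decide) (by decide) (by rw [Mon_0, Mon_6, Mon_12]; ring)
    · exact absurd (by simp [assocPairs]) hna
    · exact key2 0 13 2 11 (by decide) (by decide) (by decide) (by decide) (by decide) (by rw [Mon_0, Mon_2, Mon_11, Mon_13]; ring)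
    · exact absurd (by simp [assocPairs]) hna
    · exact absurd (by simp [assocPairs]) hna
    · exact key2 10 4 7 7 (by decide) (by decide) (by decide) (by decide) (by decide) (by rw [Mon_4, Mon_7, Mon_10]; ring)
    · exact key2 10 0 5 5 (by decide) (by decide) (by decide) (by decide) (by decide) (by rw [Mon_0, Mon_5, Mon_10]; ring)
    · exact absurd rfl hne
    · exact key2 10 12 11 11 (by decide) (by decide) (by decide) (by decide) (by decide) (by rw [Mon_10, Mon_11, Mon_12]; ring)
    · exact absurd (by simp [assocPairs]) hna
    · exact absurd (by simp [assocPairs]) hna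
    · exact key2 10 3 2 11 (by decide) (by decide) (by decide) (by decide) (by decide) (by rw [Mon_2, Mon_3, Mon_10, Mon_11]; ring)
    · exact absurd (by simp [assocPairs]) hna
    · exact key2 12 4 8 8 (by decide) (by decide) (by decide) (by decide) (by decide) (by rw [Mon_4, Mon_8, Mon_12]; ring)
    · exact key2 12 0 6 6 (by decide) (by decide) (by decide) (by decide) (by decide) (by rw [Mon_0, Mon_6, Mon_12]; ring)
    · exact key2 12 10 11 11 (by decide) (by decide) (by decide) (by decide) (by decide) (by rw [Mon_10, Mon_11, Mon_12]; ring)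
    · exact absurd rfl hne
    · exact absurd (by simp [assocPairs]) hna
    · exact absurd (by simp [assocPairs]) hna
    · exact absurd (by simp [assocPairs]) hna
    · exact key2 12 1 2 11 (by decide) (by decide) (by decide) (by decide) (by decide) (by rw [Mon_1, Mon_2, Mon_11, Mon_12]; ring)
    · exact key2 9 4 2 11 (by decide) (by decide) (by decide) (by decide) (by decide) (by rw [Mon_2, Mon_4, Mon_9, Mon_11]; ring)
    · exact absurd (by simp [assocPairs]) hna
    · exact absurd (by simp [assocPairs]) hna
    · exact absurd (by simp [assocPairs]) hna
    · exact absurd rfl hne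
    · exact key2 9 13 11 11 (by decide) (by decide) (by decide) (by decide) (by decide) (by rw [Mon_9, Mon_11, Mon_13]; ring)
    · exact key2 9 3 6 6 (by decide) (by decide) (by decide) (by decide) (by decide) (by rw [Mon_3, Mon_6, Mon_9]; ring)
    · exact key2 9 1 5 5 (by decide) (by decide) (by decide) (by decide) (by decide) (by rw [Mon_1, Mon_5, Mon_9]; ring)
    · exact absurd (by simp [assocPairs]) hna
    · exact key2 13 0 2 11 (by decide) (by decide) (by decide) (by decide) (by decide) (by rw [Mon_0, Mon_2, Mon_11, Mon_13]; ring)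
    · exact absurd (by simp [assocPairs]) hna
    · exact absurd (by simp [assocPairs]) hna
    · exact key2 13 9 11 11 (by decide) (by decide) (by decide) (by decide) (by decide) (by rw [Mon_9, Mon_11, Mon_13]; ring)
    · exact absurd rfl hne
    · exact key2 13 3 8 8 (by decide) (by decide) (by decide) (by decide) (by decide) (by rw [Mon_3, Mon_8, Mon_13]; ring)
    · exact key2 13 1 7 7 (by decide) (by decide) (by decide) (by decide) (by decide) (by rw [Mon_1, Mon_7, Mon_13]; ring)
    · exact absurd (by simp [assocPairs]) hna
    · exact absurd (by simp [assocPairs]) hna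
    · exact key2 3 10 2 11 (by decide) (by decide) (by decide) (by decide) (by decide) (by rw [Mon_2, Mon_3, Mon_10, Mon_11]; ring)
    · exact absurd (by simp [assocPairs]) hna
    · exact key2 3 9 6 6 (by decide) (by decide) (by decide) (by decide) (by decide) (by rw [Mon_3, Mon_6, Mon_9]; ring)
    · exact key2 3 13 8 8 (by decide) (by decide) (by decide) (by decide) (by decide) (by rw [Mon_3, Mon_8, Mon_13]; ring)
    · exact absurd rfl hne
    · exact key2 3 1 2 2 (by decide) (by decide) (by decide) (by decide) (by decide) (by rw [Mon_1, Mon_2, Mon_3]; ring)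
    · exact absurd (by simp [assocPairs]) hna
    · exact absurd (by simp [assocPairs]) hna
    · exact absurd (by simp [assocPairs]) hna
    · exact key2 1 12 2 11 (by decide) (by decide) (by decide) (by decide) (by decide) (by rw [Mon_1, Mon_2, Mon_11, Mon_12]; ring)
    · exact key2 1 9 5 5 (by decide) (by decide) (by decide) (by decide) (by decide) (by rw [Mon_1, Mon_5, Mon_9]; ring)
    · exact key2 1 13 7 7 (by decide) (by decide) (by decide) (by decide) (by decide) (by rw [Mon_1, Mon_7, Mon_13]; ring)
    · exact key2 1 3 2 2 (by decide) (by decide) (by decide) (by decide) (by decide) (by rw [Mon_1, Mon_2, Mon_3]; ring)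
    · exact absurd rfl hne
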